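/- For all t < 5/4, there exists a t-tough 2K₂-free graph with at least three vertices that has no spanning 2-trail. -/

import Mathlib

open SimpleGraph

def TwoK2Free {V : Type*} (G : SimpleGraph V) : Prop :=
  ¬ ∃ a b c d : V, G.Adj a b ∧ G.Adj c d ∧
      a ≠ c ∧ a ≠ d ∧ b ≠ c ∧ b ≠ d ∧
      ¬ G.Adj a c ∧ ¬ G.Adj a d ∧ ¬ G.Adj b c ∧ ¬ G.Adj b d

def Tough {V : Type*} [Fintype V] (t : ℚ) (G : SimpleGraph V) : Prop :=
  ∀ S : Finset V,
    2 ≤ Nat.card (G.induce ((↑S : Set V)ᶜ)).ConnectedComponent →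
    t * Nat.card (G.induce ((↑S : Set V)ᶜ)).ConnectedComponent ≤ S.card

def HasSpanning2Trail {V : Type*} (G : SimpleGraph V) : Prop :=
  ∃ H : G.Subgraph, H.verts = Set.univ ∧ H.coe.Connected ∧
    (∀ v, Even (H.neighborSet v).ncard) ∧ (∀ v, (H.neighborSet v).ncard ≤ 4)

abbrev V3 (n : ℕ) : Type := (Fin (4*n) ⊕ Fin (4*n)) ⊕ Fin (n-1)

def q1 {n : ℕ} (i : Fin (4*n)) : V3 n := .inl (.inl i)
def q2 {n : ℕ} (i : Fin (4*n)) : V3 n := .inl (.inr i)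
def q3 {n : ℕ} (j : Fin (n-1)) : V3 n := .inr j

def gadj {n : ℕ} : V3 n → V3 n → Prop
  | .inl (.inl i), .inl (.inl j) => i ≠ j
  | .inl (.inl i), .inl (.inr j) => i = j
  | .inl (.inr i), .inl (.inl j) => i = j
  | .inl (.inr _), .inl (.inr _) => False
  | .inr i, .inr j => i ≠ j
  | .inr _, .inl _ => True
  | .inl _, .inr _ => True

def Gn (n : ℕ) : SimpleGraph (V3 n) where
  Adj := gadj
  symm := by constructor; rintro (⟨i|i⟩|i) (⟨j|j⟩|j) h <;> simp_all [gadj] <;> omega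
  loopless := by constructor; rintro (⟨i|i⟩|i) h <;> simp_all [gadj]

lemma gn_free (n : ℕ) : TwoK2Free (Gn n) := by
  rintro ⟨(⟨a|a⟩|a), (⟨b|b⟩|b), (⟨c|c⟩|c), (⟨d|d⟩|d),
    hab, hcd, hac, had, hbc, hbd, nac, nad, nbc, nbd⟩ <;>
    simp_all [Gn, gadj]

lemma gn_no_trail (n : ℕ) (hn : 1 ≤ n) : ¬ HasSpanning2Trail (Gn n) := by
  classical
  rintro ⟨H, hverts, hconn, heven, hle4⟩
  have hmem : ∀ v : V3 n, v ∈ H.verts := by simp [hverts]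
  have h4n : 1 < 4*n := by omega
  set i0 : Fin (4*n) := ⟨0, by omega⟩ with hi0
  set i1 : Fin (4*n) := ⟨1, by omega⟩ with hi1
  -- minimum degree 2
  have hdeg2 : ∀ v : V3 n, 2 ≤ (H.neighborSet v).ncard := by
    intro v
    set w : V3 n := if v = q1 i0 then q1 i1 else q1 i0 with hw
    have hvw : v ≠ w := by
      rcases eq_or_ne v (q1 i0) with h | h
      · subst h
        simp only [hw, if_pos rfl]
        simp [q1, hi0, hi1, Fin.ext_iff]
      · simp only [hw, if_neg h]
        exact h
    obtain ⟨p⟩ := hconn ⟨v, hmem v⟩ ⟨w, hmem w⟩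
    have hnil : ¬ p.Nil := SimpleGraph.Walk.not_nil_of_ne (by simpa [Subtype.ext_iff] using hvw)
    have hadj : H.coe.Adj ⟨v, hmem v⟩ (p.getVert 1) := SimpleGraph.Walk.adj_snd hnil
    have hne : (H.neighborSet v).Nonempty := ⟨((p.getVert 1) : V3 n), by simpa using hadj⟩
    have h1 : 0 < (H.neighborSet v).ncard := (Set.ncard_pos (Set.toFinite _)).mpr hne
    obtain ⟨c, hc⟩ := heven v
    omega
  have ncard_filter : ∀ {α : Type} [Fintype α] (p : α → Prop) [DecidablePred p],
      {x | p x}.ncard = (Finset.univ.filter p).card := by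
    intro α _ p _
    rw [← Set.toFinset_setOf]
    exact Set.ncard_eq_toFinset_card' _
  have hq2 : ∀ i : Fin (4*n), (H.neighborSet (q2 i)).ncard ≤
      1 + (Finset.univ.filter fun j => H.Adj (q2 i) (q3 j)).card := by
    intro i
    have hsub : H.neighborSet (q2 i) ⊆ insert (q1 i)
        (q3 '' {j | H.Adj (q2 i) (q3 j)}) := by
      intro w hw
      have hg : (Gn n).Adj (q2 i) w := H.adj_sub hw
      rcases w with (⟨j|j⟩|j)
      · have : i = j := hg
        subst this
        exact Set.mem_insert _ _
      · exact absurd hg (by simp [Gn, gadj, q2])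
      · exact Set.mem_insert_of_mem _ ⟨j, hw, rfl⟩
    have hinj : Function.Injective (q3 (n := n)) := by
      intro a b hab
      simpa [q3] using hab
    calc (H.neighborSet (q2 i)).ncard
        ≤ (insert (q1 i) (q3 '' {j | H.Adj (q2 i) (q3 j)})).ncard :=
          Set.ncard_le_ncard hsub (Set.toFinite _)
      _ ≤ (q3 '' {j | H.Adj (q2 i) (q3 j)}).ncard + 1 := Set.ncard_insert_le _ _
      _ = {j | H.Adj (q2 i) (q3 j)}.ncard + 1 := by
          rw [Set.ncard_image_of_injective _ hinj]
      _ = 1 + (Finset.univ.filter fun j => H.Adj (q2 i) (q3 j)).card := by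
          rw [ncard_filter]; omega
  have h8n : 2 * (4*n) ≤ ∑ i : Fin (4*n), (H.neighborSet (q2 i)).ncard := by
    calc 2 * (4*n) = ∑ _i : Fin (4*n), 2 := by simp [mul_comm]
      _ ≤ _ := Finset.sum_le_sum fun i _ => hdeg2 (q2 i)
  have hsum2 : ∑ i : Fin (4*n), (H.neighborSet (q2 i)).ncard
      ≤ 4*n + ∑ i : Fin (4*n), (Finset.univ.filter fun j => H.Adj (q2 i) (q3 j)).card := by
    calc ∑ i : Fin (4*n), (H.neighborSet (q2 i)).ncard
        ≤ ∑ i : Fin (4*n), (1 + (Finset.univ.filter fun j => H.Adj (q2 i) (q3 j)).card) :=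
          Finset.sum_le_sum fun i _ => hq2 i
      _ = 4*n + ∑ i : Fin (4*n), (Finset.univ.filter fun j => H.Adj (q2 i) (q3 j)).card := by
          rw [Finset.sum_add_distrib]; simp
  have hswap : ∑ i : Fin (4*n), (Finset.univ.filter fun j => H.Adj (q2 i) (q3 j)).card
      = ∑ j : Fin (n-1), (Finset.univ.filter fun i => H.Adj (q2 i) (q3 j)).card := by
    simp only [Finset.card_filter]
    rw [Finset.sum_comm]
  have hq3 : ∀ j : Fin (n-1), (Finset.univ.filter fun i => H.Adj (q2 i) (q3 j)).card ≤ 4 := by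
    intro j
    have hinj : Function.Injective (q2 (n := n)) := by
      intro a b hab
      simpa [q2] using hab
    have hsub : (q2 '' {i | H.Adj (q2 i) (q3 j)}) ⊆ H.neighborSet (q3 j) := by
      rintro _ ⟨i, hi, rfl⟩
      exact hi.symm
    calc (Finset.univ.filter fun i => H.Adj (q2 i) (q3 j)).card
        = {i | H.Adj (q2 i) (q3 j)}.ncard := (ncard_filter _).symm
      _ = (q2 '' {i | H.Adj (q2 i) (q3 j)}).ncard :=
          (Set.ncard_image_of_injective _ hinj).symm
      _ ≤ (H.neighborSet (q3 j)).ncard := Set.ncard_le_ncard hsub (Set.toFinite _)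
      _ ≤ 4 := hle4 _
  have hfin : ∑ j : Fin (n-1), (Finset.univ.filter fun i => H.Adj (q2 i) (q3 j)).card
      ≤ 4 * (n-1) := by
    calc _ ≤ ∑ _j : Fin (n-1), 4 := Finset.sum_le_sum fun j _ => hq3 j
      _ = 4 * (n-1) := by simp [mul_comm]
  omega

lemma gn_q3_sub (n : ℕ) (S : Finset (V3 n))
    (hc : 2 ≤ Nat.card ((Gn n).induce ((↑S : Set (V3 n))ᶜ)).ConnectedComponent) :
    ∀ j : Fin (n-1), q3 j ∈ S := by
  by_contra h
  push_neg at h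
  obtain ⟨j, hj⟩ := h
  have hu : q3 j ∈ ((↑S : Set (V3 n))ᶜ) := by simpa using hj
  have hreach : ∀ v : ((↑S : Set (V3 n))ᶜ : Set (V3 n)),
      ((Gn n).induce ((↑S : Set (V3 n))ᶜ)).Reachable v ⟨q3 j, hu⟩ := by
    intro v
    rcases eq_or_ne (v : V3 n) (q3 j) with h | h
    · have : v = (⟨q3 j, hu⟩ : ((↑S : Set (V3 n))ᶜ : Set (V3 n))) := Subtype.ext h
      rw [this]
    · refine SimpleGraph.Adj.reachable ?_
      have : (Gn n).Adj (v : V3 n) (q3 j) := by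
        obtain ⟨(⟨i|i⟩|i), hv⟩ := v
        · trivial
        · trivial
        · have : i ≠ j := fun hij => h (by simp [q3, hij])
          exact this
      exact this
  have hsub : Subsingleton ((Gn n).induce ((↑S : Set (V3 n))ᶜ)).ConnectedComponent :=
    ⟨SimpleGraph.ConnectedComponent.ind₂ fun v w =>
      SimpleGraph.ConnectedComponent.sound ((hreach v).trans (hreach w).symm)⟩
  have := Finite.card_le_one_iff_subsingleton.mpr hsub
  omega

lemma gn_comp_le (n : ℕ) (S : Finset (V3 n)) (hq3 : ∀ j : Fin (n-1), q3 j ∈ S) :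
    Nat.card ((Gn n).induce ((↑S : Set (V3 n))ᶜ)).ConnectedComponent
      ≤ (Finset.univ.filter fun i : Fin (4*n) => q1 i ∈ S).card + 1 := by
  classical
  set T : Set (V3 n) := ((↑S : Set (V3 n))ᶜ) with hT
  set GT := (Gn n).induce T with hGT
  have memT : ∀ v : V3 n, v ∈ T ↔ v ∉ S := by intro v; simp [hT]
  set fv : V3 n → Option {i : Fin (4*n) // q1 i ∈ S} := fun v =>
    match v with
    | .inl (.inr i) => if h : q1 i ∈ S then some ⟨i, h⟩ else none
    | _ => none with hfv
  -- fv is constant on edges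
  have hadj : ∀ v w : T, GT.Adj v w → fv v.1 = fv w.1 := by
    rintro ⟨v, hv⟩ ⟨w, hw⟩ h
    have h' : (Gn n).Adj v w := h
    rcases v with (⟨i|i⟩|i)
    · rcases w with (⟨j|j⟩|j)
      · rfl
      · have hij : i = j := h'
        subst hij
        have : ¬ q1 i ∈ S := (memT _).mp hv
        show none = fv (.inl (.inr i))
        simp only [hfv]
        rw [dif_neg this]
      · exact absurd (hq3 j) ((memT _).mp hw)
    · rcases w with (⟨j|j⟩|j)
      · have hij : i = j := h'
        subst hij
        have : ¬ q1 i ∈ S := (memT _).mp hw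
        show fv (.inl (.inr i)) = none
        simp only [hfv]
        rw [dif_neg this]
      · exact absurd h' (by simp [Gn, gadj])
      · exact absurd (hq3 j) ((memT _).mp hw)
    · exact absurd (hq3 i) ((memT _).mp hv)
  have hwalk : ∀ (v w : T) (p : GT.Walk v w), fv v.1 = fv w.1 := by
    intro v w p
    induction p with
    | nil => rfl
    | cons ha _ ih => exact (hadj _ _ ha).trans ih
  set g : GT.ConnectedComponent → Option {i : Fin (4*n) // q1 i ∈ S} :=
    SimpleGraph.ConnectedComponent.lift (fun v => fv v.1)
      (fun v w p _ => hwalk v w p) with hg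
  -- characterize fibers of fv
  have hsome : ∀ (v : T) (a : {i : Fin (4*n) // q1 i ∈ S}),
      fv v.1 = some a → (v : V3 n) = q2 a.1 := by
    rintro ⟨(⟨i|i⟩|i), hv⟩ a hva
    · simp [hfv] at hva
    · by_cases h : q1 i ∈ S
      · simp [hfv, h] at hva
        simp [q2, ← hva]
      · simp [hfv, h] at hva
    · simp [hfv] at hva
  have hop : ∀ v : T, fv v.1 = none →
      ∃ (a : Fin (4*n)) (ha : q1 a ∈ T), GT.Reachable v ⟨q1 a, ha⟩ := by
    rintro ⟨(⟨i|i⟩|i), hv⟩ hnone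
    · exact ⟨i, hv, SimpleGraph.Reachable.refl _⟩
    · by_cases h : q1 i ∈ S
      · simp [hfv, h] at hnone
      · refine ⟨i, (memT _).mpr h, SimpleGraph.Adj.reachable ?_⟩
        show (Gn n).Adj (q2 i) (q1 i)
        exact rfl
    · exact absurd (hq3 i) ((memT _).mp hv)
  have hnone2 : ∀ v w : T, fv v.1 = none → fv w.1 = none → GT.Reachable v w := by
    intro v w hv hw
    obtain ⟨a, ha, hra⟩ := hop v hv
    obtain ⟨b, hb, hrb⟩ := hop w hw
    refine hra.trans (SimpleGraph.Reachable.trans ?_ hrb.symm)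
    rcases eq_or_ne a b with h | h
    · subst h
      rfl
    · refine SimpleGraph.Adj.reachable ?_
      show (Gn n).Adj (q1 a) (q1 b)
      exact fun hab => h (by simpa [q1] using hab)
  have ginj : Function.Injective g := by
    refine SimpleGraph.ConnectedComponent.ind₂ ?_
    intro v w hvw
    rw [hg] at hvw
    simp only [SimpleGraph.ConnectedComponent.lift_mk] at hvw
    cases hfvv : fv v.1 with
    | none =>
      rw [hfvv] at hvw
      exact SimpleGraph.ConnectedComponent.sound (hnone2 v w hfvv hvw.symm)
    | some a =>
      rw [hfvv] at hvw
      have hwa : fv w.1 = some a := hvw.symm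
      have : (v : V3 n) = (w : V3 n) := by
        rw [hsome v a hfvv, hsome w a hwa]
      rw [Subtype.ext this]
  calc Nat.card GT.ConnectedComponent
      ≤ Nat.card (Option {i : Fin (4*n) // q1 i ∈ S}) :=
        Nat.card_le_card_of_injective g ginj
    _ = Nat.card {i : Fin (4*n) // q1 i ∈ S} + 1 := Finite.card_option
    _ = (Finset.univ.filter fun i : Fin (4*n) => q1 i ∈ S).card + 1 := by
        rw [Nat.card_eq_fintype_card, Fintype.card_subtype]

lemma gn_card_ge (n : ℕ) (S : Finset (V3 n)) (hq3 : ∀ j : Fin (n-1), q3 j ∈ S) :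
    (n-1) + (Finset.univ.filter fun i : Fin (4*n) => q1 i ∈ S).card ≤ S.card := by
  classical
  have hinj1 : Function.Injective (q1 (n := n)) := fun a b hab => by simpa [q1] using hab
  have hinj3 : Function.Injective (q3 (n := n)) := fun a b hab => by simpa [q3] using hab
  set A := (Finset.univ.filter fun i : Fin (4*n) => q1 i ∈ S).image q1 with hA
  set B := (Finset.univ : Finset (Fin (n-1))).image q3 with hB
  have hdisj : Disjoint A B := by
    rw [Finset.disjoint_left]
    rintro x hx hx'
    simp only [hA, hB, Finset.mem_image] at hx hx'
    obtain ⟨i, _, rfl⟩ := hx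
    obtain ⟨j, _, hj⟩ := hx'
    exact absurd hj (by simp [q1, q3])
  have hsub : A ∪ B ⊆ S := by
    intro x hx
    rcases Finset.mem_union.mp hx with h | h
    · simp only [hA, Finset.mem_image, Finset.mem_filter] at h
      obtain ⟨i, ⟨_, hi⟩, rfl⟩ := h
      exact hi
    · simp only [hB, Finset.mem_image] at h
      obtain ⟨j, _, rfl⟩ := h
      exact hq3 j
  calc (n-1) + (Finset.univ.filter fun i : Fin (4*n) => q1 i ∈ S).card
      = B.card + A.card := by
        rw [hA, hB, Finset.card_image_of_injective _ hinj1,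
          Finset.card_image_of_injective _ hinj3]
        simp
    _ = (A ∪ B).card := by rw [Finset.card_union_of_disjoint hdisj]; omega
    _ ≤ S.card := Finset.card_le_card hsub

lemma numeric (t x y : ℚ) (hx : 3 ≤ x) (hy : 0 ≤ y) (hy4 : y ≤ 4*x)
    (ht5 : t * (4*x+1) ≤ 5*x - 1) (ht : 0 < t) : t * (y+1) ≤ (x-1) + y := by
  rcases le_or_gt t 1 with h | h
  · nlinarith
  · have h1 : (4*x - y : ℚ) ≤ t * (4*x - y) := le_mul_of_one_le_left (by linarith) h.le
    nlinarith

lemma gn_tough (t : ℚ) (n : ℕ) (hn : 3 ≤ n) (ht5 : t * (4*n+1) ≤ 5*n - 1) :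
    Tough t (Gn n) := by
  classical
  intro S hc
  set c := Nat.card ((Gn n).induce ((↑S : Set (V3 n))ᶜ)).ConnectedComponent with hcdef
  rcases le_or_gt t 0 with h | h
  · have h1 : t * c ≤ 0 := mul_nonpos_of_nonpos_of_nonneg h (by positivity)
    exact h1.trans (by positivity)
  · have hq3 := gn_q3_sub n S hc
    have h1 := gn_comp_le n S hq3
    have h2 := gn_card_ge n S hq3
    set k := (Finset.univ.filter fun i : Fin (4*n) => q1 i ∈ S).card with hk
    have hk4 : k ≤ 4*n := by
      calc k ≤ (Finset.univ : Finset (Fin (4*n))).card := Finset.card_filter_le _ _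
        _ = 4*n := by simp
    have hcast1 : (c : ℚ) ≤ (k : ℚ) + 1 := by exact_mod_cast h1
    have hcast2 : ((n : ℚ) - 1) + k ≤ (S.card : ℚ) := by
      have h1n : 1 ≤ n := by omega
      have h3 := (Nat.cast_le (α := ℚ)).mpr h2
      push_cast [Nat.cast_sub h1n] at h3
      linarith
    calc t * c ≤ t * ((k : ℚ) + 1) := by
          exact mul_le_mul_of_nonneg_left hcast1 h.le
      _ ≤ ((n : ℚ) - 1) + k := by
          refine numeric t n k ?_ ?_ ?_ ht5 h
          · exact_mod_cast hn
          · positivity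
          · exact_mod_cast hk4
      _ ≤ (S.card : ℚ) := hcast2

/-- for every `t < 5/4` there is a `t`-tough 2K₂-free graph
on at least three vertices without a spanning 2-trail. -/
theorem stmt_14 (t : ℚ) (ht : t < 5 / 4) :
    ∃ (V : Type) (_ : Fintype V) (G : SimpleGraph V),
      Tough t G ∧ TwoK2Free G ∧ 3 ≤ Fintype.card V ∧
      ¬ HasSpanning2Trail G := by
  obtain ⟨n, hn3, ht5⟩ : ∃ n : ℕ, 3 ≤ n ∧ t * (4*n+1) ≤ 5*n - 1 := by
    refine ⟨max 3 (Nat.ceil ((t+1)/(5-4*t)) + 1), le_max_left _ _, ?_⟩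
    set n : ℕ := max 3 (Nat.ceil ((t+1)/(5-4*t)) + 1) with hn
    have hd : (0:ℚ) < 5 - 4*t := by linarith
    have hnc : ((t+1)/(5-4*t)) ≤ (n : ℚ) := by
      refine le_trans (Nat.le_ceil _) ?_
      exact_mod_cast le_trans (Nat.le_succ _) (le_max_right 3 _)
    have := (div_le_iff₀ hd).mp hnc
    nlinarith
  refine ⟨V3 n, inferInstance, Gn n, gn_tough t n hn3 ht5, gn_free n, ?_,
    gn_no_trail n (by omega)⟩
  have : Fintype.card (V3 n) = (4*n + 4*n) + (n-1) := by
    simp only [V3, Fintype.card_sum, Fintype.card_fin]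
  omega
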